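/- Let n ≥ 1 and let I = (i_1,…,i_r) be a partition of n into positive parts. Then A(1,I) = A(0,I); that is, every Chern number of the Milnor hypersurface H_{1,n} = P^n(1) equals the corresponding Chern number of ℂP¹ × ℂP^{n−1} = P^n(0). (This is the Chern-number form of the paper's Corollary: H_{1,n} is complex bordant to ℂP^{n−1} × ℂP¹.) -/

import Mathlib

open MvPolynomial Finset

/-- `x = X 0` in `ℤ[x,y]`. -/
noncomputable def xv : MvPolynomial (Fin 2) ℤ := MvPolynomial.X 0

/-- `y = X 1` in `ℤ[x,y]`. -/
noncomputable def yv : MvPolynomial (Fin 2) ℤ := MvPolynomial.X 1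

/-- The `i`-th Chern class `c_i(a)` of the tangent bundle of `P^n(a)`:
`C(n,i)·y^i + (2·C(n,i−1) − a·C(n−1,i−1))·x·y^{i−1}`. -/
noncomputable def chern (n : ℕ) (a : ℤ) (i : ℕ) : MvPolynomial (Fin 2) ℤ :=
  MvPolynomial.C (n.choose i : ℤ) * yv ^ i
    + MvPolynomial.C (2 * (n.choose (i - 1) : ℤ) - a * ((n - 1).choose (i - 1) : ℤ))
      * xv * yv ^ (i - 1)

/-- Coefficient of the monomial `x·y^{n-1}`. -/
noncomputable def coeffXY (n : ℕ) (f : MvPolynomial (Fin 2) ℤ) : ℤ :=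
  f.coeff (Finsupp.single (0 : Fin 2) 1 + Finsupp.single (1 : Fin 2) (n - 1))

/-- Coefficient of the monomial `y^n`. -/
noncomputable def coeffY (n : ℕ) (f : MvPolynomial (Fin 2) ℤ) : ℤ :=
  f.coeff (Finsupp.single (1 : Fin 2) n)

/-- The Chern number `A(a,I) = coeff_{x·y^{n−1}}(∏ c_{i_q}(a)) + a·coeff_{y^n}(∏ c_{i_q}(a))`. -/
noncomputable def chernNum (n : ℕ) (a : ℤ) {r : ℕ} (i : Fin r → ℕ) : ℤ :=
  coeffXY n (∏ q, chern n a (i q)) + a * coeffY n (∏ q, chern n a (i q))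

/-- Key coefficient computation for products of binomials `c·y^j + d·x·y^{j-1}`. -/
lemma key_coeffs {ι : Type*} [DecidableEq ι] (c d : ι → ℤ) (j : ι → ℕ)
    (s : Finset ι) (hj : ∀ q ∈ s, 1 ≤ j q) :
    (MvPolynomial.coeff (Finsupp.single (1 : Fin 2) (∑ q ∈ s, j q))
      (∏ q ∈ s, (MvPolynomial.monomial (Finsupp.single (1 : Fin 2) (j q)) (c q)
        + MvPolynomial.monomial
            (Finsupp.single (0 : Fin 2) 1 + Finsupp.single (1 : Fin 2) (j q - 1)) (d q)))
      = ∏ q ∈ s, c q)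
    ∧ (MvPolynomial.coeff
        (Finsupp.single (0 : Fin 2) 1 + Finsupp.single (1 : Fin 2) ((∑ q ∈ s, j q) - 1))
      (∏ q ∈ s, (MvPolynomial.monomial (Finsupp.single (1 : Fin 2) (j q)) (c q)
        + MvPolynomial.monomial
            (Finsupp.single (0 : Fin 2) 1 + Finsupp.single (1 : Fin 2) (j q - 1)) (d q)))
      = ∑ p ∈ s, d p * ∏ q ∈ s.erase p, c q) := by
  induction s using Finset.induction with
  | empty =>
      constructor
      · simp [MvPolynomial.coeff_one]
      · simp [MvPolynomial.coeff_one, Finsupp.single_eq_zero]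
        intro h
        have := DFunLike.congr_fun h (0 : Fin 2)
        simp at this
  | @insert p s hp ih =>
      have hjp : 1 ≤ j p := hj p (Finset.mem_insert_self p s)
      have ih' := ih (fun q hq => hj q (Finset.mem_insert_of_mem hq))
      obtain ⟨ih1, ih2⟩ := ih'
      set M := ∑ q ∈ s, j q with hM
      rw [Finset.prod_insert hp, Finset.sum_insert hp]
      constructor
      · -- coefficient of y^(j p + M)
        rw [add_mul]
        rw [MvPolynomial.coeff_add]
        have e1 : Finsupp.single (1 : Fin 2) (j p + M)
            = Finsupp.single (1 : Fin 2) (j p) + Finsupp.single (1 : Fin 2) M := by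
          rw [Finsupp.single_add]
        rw [e1, MvPolynomial.coeff_monomial_mul, ih1]
        rw [MvPolynomial.coeff_monomial_mul']
        rw [if_neg, add_zero, Finset.prod_insert hp]
        intro hle
        have := hle (0 : Fin 2)
        simp at this
      · -- coefficient of x·y^(j p + M - 1)
        rw [add_mul, MvPolynomial.coeff_add]
        have e2 : Finsupp.single (0 : Fin 2) 1 + Finsupp.single (1 : Fin 2) (j p + M - 1)
            = (Finsupp.single (0 : Fin 2) 1 + Finsupp.single (1 : Fin 2) (j p - 1))
              + Finsupp.single (1 : Fin 2) M := by
          rw [add_assoc, ← Finsupp.single_add]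
          congr 2
          omega
        rw [e2, MvPolynomial.coeff_monomial_mul, ih1]
        have hy : MvPolynomial.coeff
            ((Finsupp.single (0 : Fin 2) 1 + Finsupp.single (1 : Fin 2) (j p - 1))
              + Finsupp.single (1 : Fin 2) M)
            ((MvPolynomial.monomial (Finsupp.single (1 : Fin 2) (j p)) (c p)) *
              ∏ q ∈ s, (MvPolynomial.monomial (Finsupp.single (1 : Fin 2) (j q)) (c q)
                + MvPolynomial.monomial
                    (Finsupp.single (0 : Fin 2) 1 + Finsupp.single (1 : Fin 2) (j q - 1)) (d q)))
            = c p * ∑ q ∈ s, d q * ∏ t ∈ s.erase q, c t := by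
          rcases Nat.eq_zero_or_pos M with hM0 | hM1
          · -- M = 0 forces s = ∅
            have hs : s = ∅ := by
              by_contra hne
              obtain ⟨q, hq⟩ := Finset.nonempty_iff_ne_empty.mpr hne
              have h1 : 1 ≤ j q := hj q (Finset.mem_insert_of_mem hq)
              have : j q ≤ M := Finset.single_le_sum (fun t _ => Nat.zero_le (j t)) hq
              omega
            subst hs
            rw [MvPolynomial.coeff_monomial_mul']
            rw [if_neg]
            · simp
            · intro hle
              have := hle (1 : Fin 2)
              simp [hM0] at this
              omega
          · have e3 : (Finsupp.single (0 : Fin 2) 1 + Finsupp.single (1 : Fin 2) (j p - 1))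
                + Finsupp.single (1 : Fin 2) M
                = Finsupp.single (1 : Fin 2) (j p)
                  + (Finsupp.single (0 : Fin 2) 1 + Finsupp.single (1 : Fin 2) (M - 1)) := by
              ext t
              fin_cases t <;> simp [Finsupp.single_apply] <;> omega
            rw [e3, MvPolynomial.coeff_monomial_mul, ih2]
        rw [hy]
        rw [Finset.sum_insert hp, Finset.erase_insert hp, Finset.mul_sum]
        rw [add_comm]
        congr 1
        apply Finset.sum_congr rfl
        intro q hq
        rw [Finset.erase_insert_of_ne]
        · rw [Finset.prod_insert (fun h => hp (Finset.mem_of_mem_erase h))]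
          ring
        · intro h; exact hp (h ▸ hq)

lemma chern_eq_monomial (n : ℕ) (a : ℤ) (k : ℕ) :
    chern n a k
      = MvPolynomial.monomial (Finsupp.single (1 : Fin 2) k) ((n.choose k : ℤ))
        + MvPolynomial.monomial
            (Finsupp.single (0 : Fin 2) 1 + Finsupp.single (1 : Fin 2) (k - 1))
            (2 * (n.choose (k - 1) : ℤ) - a * ((n - 1).choose (k - 1) : ℤ)) := by
  rw [chern, xv, yv]
  rw [X_pow_eq_monomial, X_pow_eq_monomial, X]
  rw [C_mul_monomial, C_mul_monomial, monomial_mul]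
  simp [add_comm]

/-- For `n ≥ 1` and any partition `I` of `n` into positive parts,
`A(1,I) = A(0,I)`: every Chern number of the Milnor hypersurface `H_{1,n} = P^n(1)`
equals the corresponding Chern number of `ℂP¹ × ℂP^{n−1} = P^n(0)`. -/

theorem chernNum_milnor_eq_product (n r : ℕ) (hn : 1 ≤ n) (hr : 1 ≤ r)
    (i : Fin r → ℕ) (hi : ∀ q, 1 ≤ i q) (hsum : ∑ q, i q = n) :
    chernNum n 1 i = chernNum n 0 i := by
  have hkey : ∀ a : ℤ, chernNum n a i =
      (∑ p, (2 * (n.choose (i p - 1) : ℤ) - a * ((n - 1).choose (i p - 1) : ℤ))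
          * ∏ q ∈ Finset.univ.erase p, (n.choose (i q) : ℤ))
        + a * ∏ q, (n.choose (i q) : ℤ) := by
    intro a
    obtain ⟨h1, h2⟩ := key_coeffs (fun q => ((n.choose (i q)) : ℤ))
      (fun q => 2 * (n.choose (i q - 1) : ℤ) - a * ((n - 1).choose (i q - 1) : ℤ)) i
      Finset.univ (fun q _ => hi q)
    rw [hsum] at h1 h2
    have hprod : (∏ q, chern n a (i q))
        = ∏ q, (MvPolynomial.monomial (Finsupp.single (1 : Fin 2) (i q)) ((n.choose (i q) : ℤ))
          + MvPolynomial.monomial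
              (Finsupp.single (0 : Fin 2) 1 + Finsupp.single (1 : Fin 2) (i q - 1))
              (2 * (n.choose (i q - 1) : ℤ) - a * ((n - 1).choose (i q - 1) : ℤ))) :=
      Finset.prod_congr rfl fun q _ => chern_eq_monomial n a (i q)
    unfold chernNum coeffXY coeffY
    rw [hprod, h1, h2]
  have hid : (∑ p, ((n - 1).choose (i p - 1) : ℤ)
        * ∏ q ∈ Finset.univ.erase p, (n.choose (i q) : ℤ))
      = ∏ q, (n.choose (i q) : ℤ) := by
    have hn0 : (n : ℤ) ≠ 0 := by exact_mod_cast (by omega : n ≠ 0)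
    apply mul_left_cancel₀ hn0
    rw [Finset.mul_sum]
    have step : ∀ p : Fin r, (n : ℤ) * (((n - 1).choose (i p - 1) : ℤ)
        * ∏ q ∈ Finset.univ.erase p, (n.choose (i q) : ℤ))
        = (i p : ℤ) * ∏ q, (n.choose (i q) : ℤ) := by
      intro p
      have hh : n * (n - 1).choose (i p - 1) = n.choose (i p) * i p := by
        have h := Nat.add_one_mul_choose_eq (n - 1) (i p - 1)
        have e1 : n - 1 + 1 = n := by omega
        have e2 : i p - 1 + 1 = i p := by have := hi p; omega
        rwa [e1, e2] at h
      have hpe : (n.choose (i p) : ℤ) * ∏ q ∈ Finset.univ.erase p, (n.choose (i q) : ℤ)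
          = ∏ q, (n.choose (i q) : ℤ) :=
        Finset.mul_prod_erase Finset.univ (fun q => ((n.choose (i q)) : ℤ)) (Finset.mem_univ p)
      calc (n : ℤ) * (((n - 1).choose (i p - 1) : ℤ)
            * ∏ q ∈ Finset.univ.erase p, (n.choose (i q) : ℤ))
          = ((n * (n - 1).choose (i p - 1) : ℕ) : ℤ)
            * ∏ q ∈ Finset.univ.erase p, (n.choose (i q) : ℤ) := by push_cast; ring
        _ = (i p : ℤ) * ((n.choose (i p) : ℤ)
            * ∏ q ∈ Finset.univ.erase p, (n.choose (i q) : ℤ)) := by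
            rw [hh]; push_cast; ring
        _ = (i p : ℤ) * ∏ q, (n.choose (i q) : ℤ) := by rw [hpe]
    rw [Finset.sum_congr rfl fun p _ => step p, ← Finset.sum_mul]
    have : (∑ p, (i p : ℤ)) = (n : ℤ) := by exact_mod_cast congrArg (Nat.cast : ℕ → ℤ) hsum
    rw [this]
  rw [hkey 1, hkey 0]
  have e : (∑ p, (2 * (n.choose (i p - 1) : ℤ) - 1 * ((n - 1).choose (i p - 1) : ℤ))
        * ∏ q ∈ Finset.univ.erase p, (n.choose (i q) : ℤ))
      = (∑ p, (2 * (n.choose (i p - 1) : ℤ) - 0 * ((n - 1).choose (i p - 1) : ℤ))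
          * ∏ q ∈ Finset.univ.erase p, (n.choose (i q) : ℤ))
        - ∑ p, ((n - 1).choose (i p - 1) : ℤ)
          * ∏ q ∈ Finset.univ.erase p, (n.choose (i q) : ℤ) := by
    rw [← Finset.sum_sub_distrib]
    exact Finset.sum_congr rfl fun p _ => by ring
  rw [e, hid]
  ring
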